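/- For all integers 1 ≤ d ≤ D, every integer n ≥ 0, and every α ∈ Y(d,n): (1/d) · Σ_{i=1}^{d} √((α_i − i + d + 1)/(α_i − i + D + 1)) ≤ √((n/d + (d+1)/2)/(n/d − (d+1)/2 + D + 1)). (This is the Jensen step f-average ≤ f(n/d − (d+1)/2), using that Σ_i (α_i − i) = n − d(d+1)/2.) -/

import Mathlib

open scoped Classical

noncomputable section

/-- The set `Y(d,n)` of Young diagrams: tuples `α ∈ ℤ^d` with
`α 1 ≥ ⋯ ≥ α d ≥ 0` and `∑ i, α i = n`. -/
def Ydn (d n : ℕ) : Finset (Fin d → ℤ) :=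
  (Fintype.piFinset fun _ => Finset.Icc (0 : ℤ) (n : ℤ)).filter
    (fun α => (∀ i j : Fin d, i ≤ j → α j ≤ α i) ∧ (∀ i, 0 ≤ α i) ∧ (∑ i, α i) = (n : ℤ))

lemma gauss_sum_real (k : ℕ) : ∑ i ∈ Finset.range k, ((i : ℝ) + 1) = k * (k + 1) / 2 := by
  induction k with
  | zero => simp
  | succ k ih =>
      rw [Finset.sum_range_succ, ih]
      push_cast
      ring

/-- The Jensen step: the average of `f(α_i - i)` over `i = 1, …, d` is at most
`f(n/d - (d+1)/2) = √((n/d + (d+1)/2)/(n/d - (d+1)/2 + D + 1))`. -/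
theorem stmt3 (d D : ℕ) (hd : 1 ≤ d) (hdD : d ≤ D) (n : ℕ)
    (α : Fin d → ℤ) (hα : α ∈ Ydn d n) :
    (1 / (d : ℝ)) * ∑ i : Fin d,
        Real.sqrt (((α i : ℝ) - ((i : ℕ) + 1) + (d : ℝ) + 1)
          / ((α i : ℝ) - ((i : ℕ) + 1) + (D : ℝ) + 1))
      ≤ Real.sqrt (((n : ℝ) / (d : ℝ) + ((d : ℝ) + 1) / 2)
          / ((n : ℝ) / (d : ℝ) - ((d : ℝ) + 1) / 2 + (D : ℝ) + 1)) := by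
  classical
  obtain ⟨-, -, h0, hsum⟩ := Finset.mem_filter.mp hα
  have hd0 : (0 : ℝ) < d := by exact_mod_cast hd
  have hdD' : (d : ℝ) ≤ D := by exact_mod_cast hdD
  set a : ℝ := (d : ℝ) + 1 with ha
  set b : ℝ := (D : ℝ) + 1 with hb
  have hab : a ≤ b := by simp only [ha, hb]; linarith
  set x : Fin d → ℝ := fun i => (α i : ℝ) - ((i : ℕ) + 1) with hxdef
  set m : ℝ := (n : ℝ) / d - ((d : ℝ) + 1) / 2 with hm
  have hxa : ∀ i, 1 ≤ x i + a := by
    intro i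
    have h1 : (0 : ℝ) ≤ (α i : ℝ) := by exact_mod_cast h0 i
    have h2 : ((i : ℕ) : ℝ) + 1 ≤ d := by exact_mod_cast i.isLt
    simp only [hxdef, ha]
    linarith
  have hxb : ∀ i, 1 ≤ x i + b := fun i => le_trans (hxa i) (by linarith [hab])
  -- sum of x
  have hsumreal : ∑ i : Fin d, (α i : ℝ) = n := by exact_mod_cast hsum
  have hgauss : ∑ i : Fin d, (((i : ℕ) : ℝ) + 1) = d * (d + 1) / 2 := by
    rw [Fin.sum_univ_eq_sum_range (fun i => ((i : ℝ) + 1))]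
    exact gauss_sum_real d
  have hsumx : ∑ i : Fin d, x i = d * m := by
    simp only [hxdef, hm, Finset.sum_sub_distrib, hsumreal, hgauss]
    field_simp
  have hcard : (Finset.univ : Finset (Fin d)).card = d := by simp
  -- m bounds
  have hma : 1 ≤ m + a := by
    have h1 : (d : ℝ) * 1 ≤ ∑ i : Fin d, (x i + a) := by
      calc (d : ℝ) * 1 = ∑ _i : Fin d, (1 : ℝ) := by simp
        _ ≤ _ := Finset.sum_le_sum fun i _ => hxa i
    rw [Finset.sum_add_distrib, hsumx] at h1
    simp only [Finset.sum_const, hcard, nsmul_eq_mul] at h1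
    nlinarith
  have hmb : 1 ≤ m + b := by linarith [hab]
  set s : ℝ := (m + a) / (m + b) with hs
  have hs0 : 0 < s := div_pos (by linarith) (by linarith)
  set u : ℝ := Real.sqrt s with hu
  have hu0 : 0 < u := Real.sqrt_pos.mpr hs0
  have hu2 : u ^ 2 = s := Real.sq_sqrt hs0.le
  -- tangent line bound
  have htan : ∀ i : Fin d, Real.sqrt ((x i + a) / (x i + b))
      ≤ u + ((x i + a) / (x i + b) - s) / (2 * u) := by
    intro i
    set t : ℝ := (x i + a) / (x i + b) with ht
    have ht0 : 0 ≤ t := div_nonneg (by linarith [hxa i]) (by linarith [hxb i])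
    have hst : Real.sqrt t * (2 * u) ≤ 2 * u ^ 2 + (t - s) := by
      have hq := Real.sq_sqrt ht0
      nlinarith [sq_nonneg (Real.sqrt t - u), Real.sqrt_nonneg t]
    rw [show u + (t - s) / (2 * u) = (2 * u ^ 2 + (t - s) - (t - s) * 1 + (t - s)) / (2 * u) by
      field_simp; ring]
    rw [le_div_iff₀ (by positivity)]
    linarith
  -- sum of t_i ≤ d * s
  have hsb : ∑ i : Fin d, (x i + b) = d * (m + b) := by
    rw [Finset.sum_add_distrib, hsumx]
    simp only [Finset.sum_const, hcard, nsmul_eq_mul]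
    ring
  have hAMHM : (d : ℝ) / (m + b) ≤ ∑ i : Fin d, 1 / (x i + b) := by
    have hcs := Finset.sq_sum_div_le_sum_sq_div (Finset.univ : Finset (Fin d))
      (fun _ => (1 : ℝ)) (g := fun i => x i + b)
      (fun i _ => lt_of_lt_of_le zero_lt_one (hxb i))
    simp only [Finset.sum_const, hcard, nsmul_eq_mul, mul_one, one_pow, hsb] at hcs
    have heq : (d : ℝ) ^ 2 / (d * (m + b)) = d / (m + b) := by
      rw [sq]
      rw [mul_div_mul_left _ _ (ne_of_gt hd0)]
    linarith [heq ▸ hcs]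
  have hT : ∑ i : Fin d, (x i + a) / (x i + b) ≤ d * s := by
    have hti : ∀ i : Fin d, (x i + a) / (x i + b) = 1 - (b - a) * (1 / (x i + b)) := by
      intro i
      have : x i + b ≠ 0 := by linarith [hxb i]
      field_simp
      ring
    have hsm : s = 1 - (b - a) * (1 / (m + b)) := by
      have : m + b ≠ 0 := by linarith
      rw [hs]; field_simp; ring
    calc ∑ i : Fin d, (x i + a) / (x i + b)
        = ∑ i : Fin d, (1 - (b - a) * (1 / (x i + b))) := by
          exact Finset.sum_congr rfl fun i _ => hti i
      _ = d - (b - a) * ∑ i : Fin d, 1 / (x i + b) := by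
          rw [Finset.sum_sub_distrib, ← Finset.mul_sum]
          simp [hcard]
      _ ≤ d - (b - a) * ((d : ℝ) / (m + b)) := by
          have := mul_le_mul_of_nonneg_left hAMHM (by linarith : (0:ℝ) ≤ b - a)
          linarith
      _ = d * s := by rw [hsm]; ring
  -- combine
  have hmain : ∑ i : Fin d, Real.sqrt ((x i + a) / (x i + b)) ≤ d * u := by
    calc ∑ i : Fin d, Real.sqrt ((x i + a) / (x i + b))
        ≤ ∑ i : Fin d, (u + ((x i + a) / (x i + b) - s) / (2 * u)) :=
          Finset.sum_le_sum fun i _ => htan i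
      _ = d * u + ((∑ i : Fin d, (x i + a) / (x i + b)) - d * s) / (2 * u) := by
          rw [Finset.sum_add_distrib]
          simp only [Finset.sum_const, hcard, nsmul_eq_mul]
          rw [← Finset.sum_div, Finset.sum_sub_distrib]
          simp only [Finset.sum_const, hcard, nsmul_eq_mul]
      _ ≤ d * u := by
          have hnum : (∑ i : Fin d, (x i + a) / (x i + b)) - d * s ≤ 0 := by linarith
          have : ((∑ i : Fin d, (x i + a) / (x i + b)) - d * s) / (2 * u) ≤ 0 :=
            div_nonpos_of_nonpos_of_nonneg hnum (by positivity)
          linarith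
  -- finish: rewrite the goal
  have hgoal : ∀ i : Fin d, ((α i : ℝ) - ((i : ℕ) + 1) + (d : ℝ) + 1)
      / ((α i : ℝ) - ((i : ℕ) + 1) + (D : ℝ) + 1) = (x i + a) / (x i + b) := by
    intro i
    simp only [hxdef, ha, hb]
    ring_nf
  have hrhs : ((n : ℝ) / (d : ℝ) + ((d : ℝ) + 1) / 2)
      / ((n : ℝ) / (d : ℝ) - ((d : ℝ) + 1) / 2 + (D : ℝ) + 1) = s := by
    rw [hs, hm, ha, hb]
    ring_nf
  simp only [hgoal, hrhs]
  rw [show ((n : ℝ) / (d : ℝ) + a / 2) / (m + (D : ℝ) + 1) = s from hrhs]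
  rw [one_div, inv_mul_le_iff₀ hd0, ← hu]
  linarith [hmain]
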